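/- Let (X,d) be a metric space and T : X → X a map such that X is T-orbitally complete and there exist k ∈ ℕ, k ≥ 1, and q ∈ [0,1) such that for all x, y ∈ X, d(Tᵏx, Tᵏy) ≤ q · max{d(x,y), d(x,Tᵏx), d(y,Tᵏy), d(x,Tᵏy), d(y,Tᵏx)}, with unique fixed point x*. Then for every x ∈ X and n ∈ ℕ, d(Tⁿx, x*) ≤ (qᵐ / (1 − q)) · max{d(Tⁱx, Tⁱ⁺ᵏx) : i = 0, 1, ..., k−1}, where m is the greatest integer not exceeding n/k. -/
import Mathlib


open Filter Topology

private lemma quasi_uniform {X : Type*} [MetricSpace X] (S : X → X) (q : ℝ)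
    (hq0 : 0 ≤ q) (hq1 : q < 1)
    (hS : ∀ x y : X, dist (S x) (S y) ≤ q * (max (dist x y) (max (dist x (S x)) (max (dist y (S y)) (max (dist x (S y)) (dist y (S x)))))))
    (y : X) : ∀ i j : ℕ, dist (S^[i] y) (S^[j] y) ≤ dist y (S y) / (1 - q) := by
  intro i j
  have h1q : (0:ℝ) < 1 - q := by linarith
  set N := max i j with hN
  have hiN : i ≤ N := le_max_left _ _
  have hjN : j ≤ N := le_max_right _ _
  set Fs : Finset (ℕ × ℕ) := Finset.range (N+1) ×ˢ Finset.range (N+1) with hFs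
  have hne : Fs.Nonempty := ⟨(0,0), by simp [hFs]⟩
  set M := Fs.sup' hne (fun p => dist (S^[p.1] y) (S^[p.2] y)) with hM
  have hmem : ∀ a b : ℕ, a ≤ N → b ≤ N → dist (S^[a] y) (S^[b] y) ≤ M := by
    intro a b ha hb
    exact Finset.le_sup' (f := fun p => dist (S^[p.1] y) (S^[p.2] y))
      (by simp [hFs, Nat.lt_succ_iff, ha, hb] : ((a,b) : ℕ × ℕ) ∈ Fs)
  have hM0 : 0 ≤ M := by
    have := hmem 0 0 (Nat.zero_le _) (Nat.zero_le _)
    simpa using this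
  have hstep : ∀ a b : ℕ, a ≤ N → b ≤ N → 1 ≤ a → 1 ≤ b →
      dist (S^[a] y) (S^[b] y) ≤ q * M := by
    intro a b ha hb ha1 hb1
    obtain ⟨a', rfl⟩ : ∃ t, a = t + 1 := ⟨a - 1, by omega⟩
    obtain ⟨b', rfl⟩ : ∃ t, b = t + 1 := ⟨b - 1, by omega⟩
    rw [Function.iterate_succ_apply', Function.iterate_succ_apply']
    refine (hS _ _).trans ?_
    refine mul_le_mul_of_nonneg_left ?_ hq0
    refine max_le ?_ (max_le ?_ (max_le ?_ (max_le ?_ ?_)))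
    · exact hmem a' b' (by omega) (by omega)
    · rw [← Function.iterate_succ_apply' S a' y]; exact hmem _ _ (by omega) (by omega)
    · rw [← Function.iterate_succ_apply' S b' y]; exact hmem _ _ (by omega) (by omega)
    · rw [← Function.iterate_succ_apply' S b' y]; exact hmem _ _ (by omega) (by omega)
    · rw [← Function.iterate_succ_apply' S a' y]; exact hmem _ _ (by omega) (by omega)
  have hMle : M ≤ dist y (S y) / (1 - q) := by
    obtain ⟨⟨a, b⟩, hp, hpM⟩ := Finset.exists_mem_eq_sup' hne
      (fun p => dist (S^[p.1] y) (S^[p.2] y))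
    rw [← hM] at hpM
    simp only at hpM
    have haN : a ≤ N := by
      have := (Finset.mem_product.mp hp).1; simpa [Nat.lt_succ_iff] using this
    have hbN : b ≤ N := by
      have := (Finset.mem_product.mp hp).2; simpa [Nat.lt_succ_iff] using this
    rw [le_div_iff₀ h1q]
    rcases Nat.eq_zero_or_pos a with ha0 | ha1
    · rcases Nat.eq_zero_or_pos b with hb0 | hb1
      · subst ha0; subst hb0
        simp only [Function.iterate_zero_apply, dist_self] at hpM
        nlinarith [dist_nonneg (x := y) (y := S y)]
      · subst ha0
        have htri : M ≤ dist y (S y) + dist (S y) (S^[b] y) := by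
          rw [hpM]
          simpa using dist_triangle y (S y) (S^[b] y)
        have h1 : dist (S^[1] y) (S^[b] y) ≤ q * M :=
          hstep 1 b (by omega) hbN le_rfl hb1
        rw [Function.iterate_one] at h1
        nlinarith
    · rcases Nat.eq_zero_or_pos b with hb0 | hb1
      · subst hb0
        have htri : M ≤ dist y (S y) + dist (S y) (S^[a] y) := by
          rw [hpM, dist_comm]
          simpa using dist_triangle y (S y) (S^[a] y)
        have h1 : dist (S^[1] y) (S^[a] y) ≤ q * M :=
          hstep 1 a (by omega) haN le_rfl ha1
        rw [Function.iterate_one] at h1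
        nlinarith
      · have h1 : M ≤ q * M := by
          nth_rewrite 1 [hpM]; exact hstep a b haN hbN ha1 hb1
        nlinarith [dist_nonneg (x := y) (y := S y)]
  exact (hmem i j hiN hjN).trans hMle

private lemma quasi_geom {X : Type*} [MetricSpace X] (S : X → X) (q : ℝ)
    (hq0 : 0 ≤ q) (hq1 : q < 1)
    (hS : ∀ x y : X, dist (S x) (S y) ≤ q * (max (dist x y) (max (dist x (S x)) (max (dist y (S y)) (max (dist x (S y)) (dist y (S x)))))))
    (y : X) : ∀ m i j : ℕ, dist (S^[m + i] y) (S^[m + j] y) ≤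
      q ^ m * (dist y (S y) / (1 - q)) := by
  intro m
  induction m with
  | zero => intro i j; simpa using quasi_uniform S q hq0 hq1 hS y i j
  | succ m ih =>
    intro i j
    have e1 : m + 1 + i = (m + i) + 1 := by omega
    have e2 : m + 1 + j = (m + j) + 1 := by omega
    rw [e1, e2, Function.iterate_succ_apply', Function.iterate_succ_apply']
    refine (hS _ _).trans ?_
    have hb : q ^ (m + 1) * (dist y (S y) / (1 - q)) =
        q * (q ^ m * (dist y (S y) / (1 - q))) := by ring
    rw [hb]
    refine mul_le_mul_of_nonneg_left ?_ hq0
    refine max_le ?_ (max_le ?_ (max_le ?_ (max_le ?_ ?_)))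
    · exact ih i j
    · rw [← Function.iterate_succ_apply' S (m + i) y]; exact ih i (i + 1)
    · rw [← Function.iterate_succ_apply' S (m + j) y]; exact ih j (j + 1)
    · rw [← Function.iterate_succ_apply' S (m + j) y]; exact ih i (j + 1)
    · rw [← Function.iterate_succ_apply' S (m + i) y]; exact ih j (i + 1)

private lemma quasi_fix {X : Type*} [MetricSpace X] (S : X → X) (q : ℝ)
    (hq0 : 0 ≤ q) (hq1 : q < 1)
    (hS : ∀ x y : X, dist (S x) (S y) ≤ q * (max (dist x y) (max (dist x (S x)) (max (dist y (S y)) (max (dist x (S y)) (dist y (S x)))))))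
    (xs : X) (hxs : S xs = xs) (y : X) :
    ∀ m : ℕ, dist (S^[m] y) xs ≤ q ^ m * (dist y (S y) / (1 - q)) := by
  have h1q : (0:ℝ) < 1 - q := by linarith
  have hD0 : 0 ≤ dist y (S y) / (1 - q) := div_nonneg dist_nonneg (le_of_lt h1q)
  intro m
  induction m with
  | zero =>
    simp only [Function.iterate_zero_apply, pow_zero, one_mul]
    have hc := hS y xs
    rw [hxs, dist_self] at hc
    set a := dist y xs with ha
    set b := dist y (S y) with hb
    set c := dist xs (S y) with hcc
    have hca : dist (S y) xs = c := dist_comm (S y) xs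
    rw [hca] at hc
    have htri : a ≤ b + c := by
      have := dist_triangle y (S y) xs
      rw [hca] at this; exact this
    have hred : max a (max b (max 0 (max a c))) ≤ max a (max b c) := by
      refine max_le (le_max_left _ _) (max_le (le_max_of_le_right (le_max_left _ _))
        (max_le ?_ (max_le (le_max_left _ _) (le_max_of_le_right (le_max_right _ _)))))
      exact le_trans dist_nonneg (le_max_left a (max b c))
    have hc2 : c ≤ q * max a (max b c) := hc.trans (mul_le_mul_of_nonneg_left hred hq0)
    rw [le_div_iff₀ h1q]
    have ha0 : 0 ≤ a := dist_nonneg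
    have hb0 : 0 ≤ b := dist_nonneg
    have hc0 : 0 ≤ c := dist_nonneg
    rcases max_cases a (max b c) with ⟨h1, _⟩ | ⟨h1, _⟩
    · rw [h1] at hc2; nlinarith
    · rw [h1] at hc2
      rcases max_cases b c with ⟨h2, _⟩ | ⟨h2, _⟩
      · rw [h2] at hc2; nlinarith
      · rw [h2] at hc2; nlinarith
  | succ m ih =>
    rw [Function.iterate_succ_apply']
    have hB : dist (S^[m] y) (S (S^[m] y)) ≤ q ^ m * (dist y (S y) / (1 - q)) := by
      rw [← Function.iterate_succ_apply' S m y]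
      exact quasi_geom S q hq0 hq1 hS y m 0 1
    have hc := hS (S^[m] y) xs
    rw [hxs, dist_self] at hc
    set A := dist (S^[m] y) xs with hA
    set C := dist (S (S^[m] y)) xs with hC
    have hcomm : dist xs (S (S^[m] y)) = C := dist_comm xs (S (S^[m] y))
    rw [hcomm] at hc
    have hred : max A (max (dist (S^[m] y) (S (S^[m] y))) (max 0 (max A C))) ≤
        max (q ^ m * (dist y (S y) / (1 - q))) C := by
      have hA' : A ≤ q ^ m * (dist y (S y) / (1 - q)) := ih
      refine max_le (le_max_of_le_left hA') (max_le (le_max_of_le_left hB)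
        (max_le ?_ (max_le (le_max_of_le_left hA') (le_max_right _ _))))
      exact le_max_of_le_left (le_trans (mul_nonneg (pow_nonneg hq0 m) hD0) le_rfl)
    have hc2 : C ≤ q * max (q ^ m * (dist y (S y) / (1 - q))) C :=
      hc.trans (mul_le_mul_of_nonneg_left hred hq0)
    rcases max_cases (q ^ m * (dist y (S y) / (1 - q))) C with ⟨h1, _⟩ | ⟨h1, _⟩
    · rw [h1] at hc2
      calc C ≤ q * (q ^ m * (dist y (S y) / (1 - q))) := hc2
        _ = q ^ (m + 1) * (dist y (S y) / (1 - q)) := by ring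
    · rw [h1] at hc2
      have hC0 : 0 ≤ C := dist_nonneg
      have : C ≤ 0 := by nlinarith
      calc C ≤ 0 := this
        _ ≤ q ^ (m + 1) * (dist y (S y) / (1 - q)) :=
          mul_nonneg (pow_nonneg hq0 _) hD0

/-- Error estimate in Ćirić's theorem for an iterate `Tᵏ` that is a
quasi-contraction. -/
theorem stmt10 {X : Type*} [MetricSpace X] (T : X → X) (k : ℕ) (hk : 1 ≤ k)
    (q : ℝ) (hq0 : 0 ≤ q) (hq1 : q < 1)
    (hT : ∀ x y : X, dist (T^[k] x) (T^[k] y) ≤ q * (max (dist x y) (max (dist x (T^[k] x)) (max (dist y (T^[k] y)) (max (dist x (T^[k] y)) (dist y (T^[k] x)))))))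
    (horb : ∀ x : X, ∀ u : ℕ → X, (∀ n : ℕ, ∃ m : ℕ, u n = T^[m] x) →
      CauchySeq u → ∃ y : X, Tendsto u atTop (𝓝 y))
    (xs : X) (hfix : T xs = xs) (huniq : ∀ y : X, T y = y → y = xs)
    : ∀ (x : X) (n : ℕ), dist (T^[n] x) xs ≤ q ^ (n / k) / (1 - q) *
        (Finset.range k).sup' (Finset.nonempty_range_iff.mpr (by omega))
          (fun i => dist (T^[i] x) (T^[i + k] x)) := by
  intro x n
  have hk0 : 0 < k := hk
  have h1q : (0:ℝ) < 1 - q := by linarith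
  set r := n % k with hr
  set m := n / k with hm
  have hrk : r < k := Nat.mod_lt _ hk0
  have hn : n = k * m + r := (Nat.div_add_mod n k).symm
  have hiter : T^[n] x = (T^[k])^[m] (T^[r] x) := by
    rw [hn, Function.iterate_add_apply, Function.iterate_mul]
  have hxs : (T^[k]) xs = xs := Function.iterate_fixed hfix k
  have key := quasi_fix (T^[k]) q hq0 hq1 hT xs hxs (T^[r] x) m
  rw [hiter]
  have hb : dist (T^[r] x) (T^[k] (T^[r] x)) = dist (T^[r] x) (T^[r + k] x) := by
    rw [add_comm r k, Function.iterate_add_apply]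
  have hM : dist (T^[r] x) (T^[r + k] x) ≤
      (Finset.range k).sup' (Finset.nonempty_range_iff.mpr (by omega))
        (fun i => dist (T^[i] x) (T^[i + k] x)) :=
    Finset.le_sup' (f := fun i => dist (T^[i] x) (T^[i + k] x)) (Finset.mem_range.mpr hrk)
  calc dist ((T^[k])^[m] (T^[r] x)) xs
      ≤ q ^ m * (dist (T^[r] x) (T^[k] (T^[r] x)) / (1 - q)) := key
    _ = q ^ m / (1 - q) * dist (T^[r] x) (T^[r + k] x) := by rw [hb]; ring
    _ ≤ q ^ m / (1 - q) * (Finset.range k).sup' (Finset.nonempty_range_iff.mpr (by omega))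
          (fun i => dist (T^[i] x) (T^[i + k] x)) := by
        exact mul_le_mul_of_nonneg_left hM (div_nonneg (pow_nonneg hq0 m) (le_of_lt h1q))
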